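/- Let G=(V,E) be a graph and K₂ the complete graph with vertices a,b. Define radii_{a=b=1}(G ⊕ K₂) ⊆ ℝ^V to be the set of all (r_v)_{v ∈ V} such that the vector on V ∪ {a,b} extending (r_v)_{v ∈ V} by r_a = r_b = 1 lies in radii₃(G ⊕ K₂). If radii_{a=b=1}(G ⊕ K₂) has non-empty interior in ℝ^V, then radii₃(G ⊕ K₂) has non-empty interior in ℝ^{V ∪ {a,b}}. -/

import Mathlib

noncomputable section

/-- A `d`-dimensional sphere packing with contact graph `G`, centres `p` and radii `r`:
the spheres have disjoint interiors and two spheres touch iff the vertices are adjacent. -/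
def IsSpherePacking {V : Type*} (d : ℕ) (G : SimpleGraph V)
    (p : V → EuclideanSpace ℝ (Fin d)) (r : V → ℝ) : Prop :=
  (∀ v, 0 < r v) ∧
  ∀ v w : V, v ≠ w →
    r v + r w ≤ dist (p v) (p w) ∧ (dist (p v) (p w) = r v + r w ↔ G.Adj v w)

/-- The join `G ⊕ K₂` of `G` with the complete graph on two new vertices
(the two elements of `Fin 2`). -/
def joinK2 {V : Type*} (G : SimpleGraph V) : SimpleGraph (V ⊕ Fin 2) where
  Adj x y :=
    match x, y with
    | Sum.inl u, Sum.inl v => G.Adj u v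
    | Sum.inl _, Sum.inr _ => True
    | Sum.inr _, Sum.inl _ => True
    | Sum.inr i, Sum.inr j => i ≠ j
  symm := by
    constructor
    rintro (u | i) (v | j) h
    · exact h.symm
    · trivial
    · trivial
    · exact h.symm
  loopless := by
    constructor
    rintro (u | i) h
    · exact G.irrefl h
    · exact h rfl

/-- The set of radii vectors admitting a `d`-dimensional sphere packing
with contact graph `G`. -/
def radiiSet {V : Type*} (d : ℕ) (G : SimpleGraph V) : Set (V → ℝ) :=
  {r | ∃ p, IsSpherePacking d G p r}

open RealInnerProductSpace

private lemma eq_of_sq_eq_sq' {a b : ℝ} (ha : 0 ≤ a) (hb : 0 ≤ b) (h : a ^ 2 = b ^ 2) :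
    a = b := by
  rw [← Real.sqrt_sq ha, ← Real.sqrt_sq hb, h]

private lemma le_of_sq_le_sq' {a b : ℝ} (ha : 0 ≤ a) (hb : 0 ≤ b) (h : a ^ 2 ≤ b ^ 2) :
    a ≤ b := by
  rw [← Real.sqrt_sq ha, ← Real.sqrt_sq hb]
  exact Real.sqrt_le_sqrt h

private lemma real_key (A B C ra rb : ℝ) (hda : A - ra ^ 2 ≠ 0) (hdb : B - rb ^ 2 ≠ 0) :
    ((A - ra ^ 2)⁻¹ ^ 2 * A - 2 * ((A - ra ^ 2)⁻¹ * ((B - rb ^ 2)⁻¹ * C))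
        + (B - rb ^ 2)⁻¹ ^ 2 * B)
      - (ra / (A - ra ^ 2) + rb / (B - rb ^ 2)) ^ 2
      = ((A - 2 * C + B) - (ra + rb) ^ 2) / ((A - ra ^ 2) * (B - rb ^ 2)) := by
  field_simp
  ring

private lemma key_alg (a b : EuclideanSpace ℝ (Fin 3)) (ra rb : ℝ)
    (hda : ‖a‖ ^ 2 - ra ^ 2 ≠ 0) (hdb : ‖b‖ ^ 2 - rb ^ 2 ≠ 0) :
    ‖(‖a‖ ^ 2 - ra ^ 2)⁻¹ • a - (‖b‖ ^ 2 - rb ^ 2)⁻¹ • b‖ ^ 2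
      - (ra / (‖a‖ ^ 2 - ra ^ 2) + rb / (‖b‖ ^ 2 - rb ^ 2)) ^ 2
      = (‖a - b‖ ^ 2 - (ra + rb) ^ 2) / ((‖a‖ ^ 2 - ra ^ 2) * (‖b‖ ^ 2 - rb ^ 2)) := by
  have h1 : ‖(‖a‖ ^ 2 - ra ^ 2)⁻¹ • a - (‖b‖ ^ 2 - rb ^ 2)⁻¹ • b‖ ^ 2
      = ‖(‖a‖ ^ 2 - ra ^ 2)⁻¹ • a‖ ^ 2
        - 2 * ⟪(‖a‖ ^ 2 - ra ^ 2)⁻¹ • a, (‖b‖ ^ 2 - rb ^ 2)⁻¹ • b⟫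
        + ‖(‖b‖ ^ 2 - rb ^ 2)⁻¹ • b‖ ^ 2 := norm_sub_sq_real _ _
  have h2 : ‖a - b‖ ^ 2 = ‖a‖ ^ 2 - 2 * ⟪a, b⟫ + ‖b‖ ^ 2 := norm_sub_sq_real _ _
  have h3 : ‖(‖a‖ ^ 2 - ra ^ 2)⁻¹ • a‖ ^ 2 = (‖a‖ ^ 2 - ra ^ 2)⁻¹ ^ 2 * ‖a‖ ^ 2 := by
    rw [norm_smul, Real.norm_eq_abs, mul_pow, sq_abs]
  have h4 : ‖(‖b‖ ^ 2 - rb ^ 2)⁻¹ • b‖ ^ 2 = (‖b‖ ^ 2 - rb ^ 2)⁻¹ ^ 2 * ‖b‖ ^ 2 := by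
    rw [norm_smul, Real.norm_eq_abs, mul_pow, sq_abs]
  have h5 : ⟪(‖a‖ ^ 2 - ra ^ 2)⁻¹ • a, (‖b‖ ^ 2 - rb ^ 2)⁻¹ • b⟫
      = (‖a‖ ^ 2 - ra ^ 2)⁻¹ * ((‖b‖ ^ 2 - rb ^ 2)⁻¹ * ⟪a, b⟫) := by
    rw [real_inner_smul_left, real_inner_smul_right]
  rw [h1, h2, h3, h4, h5]
  exact real_key (‖a‖ ^ 2) (‖b‖ ^ 2) ⟪a, b⟫ ra rb hda hdb

private lemma inversion_packing {W : Type*} {H : SimpleGraph W}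
    {p : W → EuclideanSpace ℝ (Fin 3)} {r : W → ℝ}
    (hp : IsSpherePacking 3 H p r) (x : EuclideanSpace ℝ (Fin 3))
    (hd : ∀ v, 0 < ‖p v - x‖ ^ 2 - r v ^ 2) :
    IsSpherePacking 3 H (fun v => x + (‖p v - x‖ ^ 2 - r v ^ 2)⁻¹ • (p v - x))
      (fun v => r v / (‖p v - x‖ ^ 2 - r v ^ 2)) := by
  obtain ⟨hpos, hpack⟩ := hp
  refine ⟨fun v => div_pos (hpos v) (hd v), fun v w hvw => ?_⟩
  dsimp only
  obtain ⟨hge, hiff⟩ := hpack v w hvw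
  have hdv := hd v
  have hdw := hd w
  have hsub : (x + (‖p v - x‖ ^ 2 - r v ^ 2)⁻¹ • (p v - x))
      - (x + (‖p w - x‖ ^ 2 - r w ^ 2)⁻¹ • (p w - x))
      = (‖p v - x‖ ^ 2 - r v ^ 2)⁻¹ • (p v - x)
        - (‖p w - x‖ ^ 2 - r w ^ 2)⁻¹ • (p w - x) := by abel
  have hpvw : p v - p w = (p v - x) - (p w - x) := by abel
  have key : dist (x + (‖p v - x‖ ^ 2 - r v ^ 2)⁻¹ • (p v - x))
        (x + (‖p w - x‖ ^ 2 - r w ^ 2)⁻¹ • (p w - x)) ^ 2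
      - (r v / (‖p v - x‖ ^ 2 - r v ^ 2) + r w / (‖p w - x‖ ^ 2 - r w ^ 2)) ^ 2
      = (dist (p v) (p w) ^ 2 - (r v + r w) ^ 2)
        / ((‖p v - x‖ ^ 2 - r v ^ 2) * (‖p w - x‖ ^ 2 - r w ^ 2)) := by
    rw [dist_eq_norm, dist_eq_norm, hsub, hpvw]
    exact key_alg _ _ _ _ hdv.ne' hdw.ne'
  set D1 := dist (x + (‖p v - x‖ ^ 2 - r v ^ 2)⁻¹ • (p v - x))
    (x + (‖p w - x‖ ^ 2 - r w ^ 2)⁻¹ • (p w - x)) with hD1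
  set S1 := r v / (‖p v - x‖ ^ 2 - r v ^ 2) + r w / (‖p w - x‖ ^ 2 - r w ^ 2) with hS1
  have hS1pos : 0 < S1 := by
    rw [hS1]; exact add_pos (div_pos (hpos v) hdv) (div_pos (hpos w) hdw)
  have hD1nonneg : 0 ≤ D1 := by rw [hD1]; exact dist_nonneg
  clear_value D1 S1
  have hprod : 0 < (‖p v - x‖ ^ 2 - r v ^ 2) * (‖p w - x‖ ^ 2 - r w ^ 2) := mul_pos hdv hdw
  have hsum : 0 < r v + r w := add_pos (hpos v) (hpos w)
  have hfrac : 0 ≤ dist (p v) (p w) ^ 2 - (r v + r w) ^ 2 := by nlinarith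
  have hk : 0 ≤ D1 ^ 2 - S1 ^ 2 := by rw [key]; exact div_nonneg hfrac hprod.le
  constructor
  · exact le_of_sq_le_sq' hS1pos.le hD1nonneg (by linarith)
  · constructor
    · intro heq
      apply hiff.mp
      have h0 : dist (p v) (p w) ^ 2 - (r v + r w) ^ 2 = 0 := by
        have hz : (dist (p v) (p w) ^ 2 - (r v + r w) ^ 2)
            / ((‖p v - x‖ ^ 2 - r v ^ 2) * (‖p w - x‖ ^ 2 - r w ^ 2)) = 0 := by
          rw [← key, heq]; ring
        exact (div_eq_zero_iff.mp hz).resolve_right hprod.ne'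
      exact eq_of_sq_eq_sq' dist_nonneg hsum.le (by linarith)
    · intro hadj
      have heq : dist (p v) (p w) = r v + r w := hiff.mpr hadj
      have h0 : D1 ^ 2 - S1 ^ 2 = 0 := by rw [key, heq]; ring
      exact eq_of_sq_eq_sq' hD1nonneg hS1pos.le (by linarith)

private lemma smul_packing {W : Type*} {H : SimpleGraph W}
    {p : W → EuclideanSpace ℝ (Fin 3)} {r : W → ℝ}
    (hp : IsSpherePacking 3 H p r) {c : ℝ} (hc : 0 < c) :
    IsSpherePacking 3 H (fun v => c • p v) (fun v => c * r v) := by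
  obtain ⟨hpos, hpack⟩ := hp
  refine ⟨fun v => mul_pos hc (hpos v), fun v w hvw => ?_⟩
  dsimp only
  obtain ⟨hge, hiff⟩ := hpack v w hvw
  have hdist : dist (c • p v) (c • p w) = c * dist (p v) (p w) := by
    rw [dist_eq_norm, dist_eq_norm, ← smul_sub, norm_smul, Real.norm_eq_abs, abs_of_pos hc]
  rw [hdist]
  constructor
  · nlinarith [mul_le_mul_of_nonneg_left hge hc.le]
  · constructor
    · intro h
      exact hiff.mp (mul_left_cancel₀ hc.ne' (by linarith))
    · intro h
      rw [hiff.mpr h]; ring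

private lemma geom {V : Type*} {G : SimpleGraph V} {p : V ⊕ Fin 2 → EuclideanSpace ℝ (Fin 3)}
    {r : V → ℝ}
    (hp : IsSpherePacking 3 (joinK2 G) p (Sum.elim r fun _ => 1)) (w : ℝ) :
    ∃ x, (∀ v : V, ‖p (Sum.inl v) - x‖ ^ 2 - r v ^ 2 = 2 * r v + w ^ 2) ∧
      ‖p (Sum.inr 0) - x‖ ^ 2 - 1 ^ 2 = w ^ 2 - 2 * w ∧
      ‖p (Sum.inr 1) - x‖ ^ 2 - 1 ^ 2 = w ^ 2 + 2 * w := by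
  obtain ⟨hpos, hpack⟩ := hp
  set pa := p (Sum.inr 0) with hpa
  set pb := p (Sum.inr 1) with hpb
  have hab : dist pa pb = 2 := by
    have h := (hpack (Sum.inr 0) (Sum.inr 1) (by simp)).2.mpr
      (show ((0 : Fin 2) ≠ 1) by decide)
    have h2 : dist (p (Sum.inr 0)) (p (Sum.inr 1)) = 1 + 1 := by simpa using h
    rw [hpa, hpb, h2]; norm_num
  have hnab : ‖pa - pb‖ = 2 := by rw [← dist_eq_norm]; exact hab
  set e := (2:ℝ)⁻¹ • (pa - pb) with he_def
  have he : ‖e‖ ^ 2 = 1 := by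
    rw [he_def, norm_smul, Real.norm_eq_abs, hnab, mul_pow, sq_abs]
    norm_num
  refine ⟨(2:ℝ)⁻¹ • (pa + pb) + w • e, ?_, ?_, ?_⟩
  · intro v
    have hva : dist (p (Sum.inl v)) pa = r v + 1 := by
      have h := (hpack (Sum.inl v) (Sum.inr 0) (by simp)).2.mpr trivial
      simpa using h
    have hvb : dist (p (Sum.inl v)) pb = r v + 1 := by
      have h := (hpack (Sum.inl v) (Sum.inr 1) (by simp)).2.mpr trivial
      simpa using h
    set y := p (Sum.inl v) - (2:ℝ)⁻¹ • (pa + pb) with hy_def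
    have h1 : ‖y - e‖ = r v + 1 := by
      have hye : y - e = p (Sum.inl v) - pa := by rw [hy_def, he_def]; module
      rw [hye, ← dist_eq_norm]; exact hva
    have h2 : ‖y + e‖ = r v + 1 := by
      have hye : y + e = p (Sum.inl v) - pb := by rw [hy_def, he_def]; module
      rw [hye, ← dist_eq_norm]; exact hvb
    have e1 : ‖y - e‖ ^ 2 = ‖y‖ ^ 2 - 2 * ⟪y, e⟫ + ‖e‖ ^ 2 := norm_sub_sq_real _ _
    have e2 : ‖y + e‖ ^ 2 = ‖y‖ ^ 2 + 2 * ⟪y, e⟫ + ‖e‖ ^ 2 := norm_add_sq_real _ _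
    rw [h1, he] at e1
    rw [h2, he] at e2
    have hinner : ⟪y, e⟫ = 0 := by linarith
    have hy2 : ‖y‖ ^ 2 = (r v + 1) ^ 2 - 1 := by linarith
    have hx : p (Sum.inl v) - ((2:ℝ)⁻¹ • (pa + pb) + w • e) = y - w • e := by
      rw [hy_def]; module
    rw [hx]
    have e3 : ‖y - w • e‖ ^ 2 = ‖y‖ ^ 2 - 2 * ⟪y, w • e⟫ + ‖w • e‖ ^ 2 := norm_sub_sq_real _ _
    have hin : ⟪y, w • e⟫ = w * ⟪y, e⟫ := real_inner_smul_right _ _ _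
    have hwe : ‖w • e‖ ^ 2 = w ^ 2 * ‖e‖ ^ 2 := by
      rw [norm_smul, Real.norm_eq_abs, mul_pow, sq_abs]
    rw [e3, hin, hinner, hwe, he, hy2]
    ring
  · have hx : pa - ((2:ℝ)⁻¹ • (pa + pb) + w • e) = (1 - w) • e := by rw [he_def]; module
    rw [hx, norm_smul, Real.norm_eq_abs, mul_pow, sq_abs, he]
    ring
  · have hx : pb - ((2:ℝ)⁻¹ • (pa + pb) + w • e) = (-1 - w) • e := by rw [he_def]; module
    rw [hx, norm_smul, Real.norm_eq_abs, mul_pow, sq_abs, he]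
    ring

private def denA {V : Type*} (s : V ⊕ Fin 2 → ℝ) (v : V) : ℝ :=
  4 * s (Sum.inr 0) * (s (Sum.inr 0) + s (Sum.inr 1)) ^ 2
    - 4 * s (Sum.inr 0) * (s (Sum.inr 0) + s (Sum.inr 1)) * (s (Sum.inr 0) - s (Sum.inr 1))
    - 2 * s (Sum.inl v) * (s (Sum.inr 0) - s (Sum.inr 1)) ^ 2

private def gA {V : Type*} (s : V ⊕ Fin 2 → ℝ) (v : V) : ℝ :=
  4 * s (Sum.inl v) * (s (Sum.inr 0) + s (Sum.inr 1)) ^ 2 / denA s v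

/-- If `radii_{a=b=1}(G ⊕ K₂)` has non-empty interior in `ℝ^V` then
`radii₃(G ⊕ K₂)` has non-empty interior in `ℝ^{V ∪ {a,b}}`. -/
theorem radii_interior_of_unit_K2 {V : Type*} [Fintype V] (G : SimpleGraph V)
    (h : (interior {r : V → ℝ |
      Sum.elim r (fun _ : Fin 2 => (1 : ℝ)) ∈ radiiSet 3 (joinK2 G)}).Nonempty) :
    (interior (radiiSet 3 (joinK2 G))).Nonempty := by
  classical
  obtain ⟨r₀, hr₀⟩ := h
  set S : Set (V → ℝ) :=
    {r : V → ℝ | Sum.elim r (fun _ : Fin 2 => (1 : ℝ)) ∈ radiiSet 3 (joinK2 G)} with hSdef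
  -- the candidate open neighbourhood
  set N : Set (V ⊕ Fin 2 → ℝ) :=
    {s | 0 < s (Sum.inr 0)} ∩ {s | 0 < s (Sum.inr 1)} ∩
      ({s | ∀ v, 0 < denA s v} ∩ {s | (fun v => gA s v) ∈ interior S}) with hNdef
  -- continuity facts
  have hcont_den : ∀ v : V, Continuous fun s : V ⊕ Fin 2 → ℝ => denA s v := by
    intro v
    unfold denA
    fun_prop
  have hcont_num : ∀ v : V, Continuous fun s : V ⊕ Fin 2 → ℝ =>
      4 * s (Sum.inl v) * (s (Sum.inr 0) + s (Sum.inr 1)) ^ 2 := by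
    intro v
    fun_prop
  have hWopen : IsOpen {s : V ⊕ Fin 2 → ℝ | ∀ v, 0 < denA s v} := by
    have : {s : V ⊕ Fin 2 → ℝ | ∀ v, 0 < denA s v} = ⋂ v, {s | 0 < denA s v} := by
      ext s; simp
    rw [this]
    exact isOpen_iInter_of_finite fun v => isOpen_lt continuous_const (hcont_den v)
  have hNopen : IsOpen N := by
    rw [hNdef]
    refine ((isOpen_lt continuous_const (continuous_apply _)).inter
      (isOpen_lt continuous_const (continuous_apply _))).inter ?_
    refine ContinuousOn.isOpen_inter_preimage ?_ hWopen isOpen_interior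
    rw [continuousOn_pi]
    intro v
    exact ((hcont_num v).continuousOn).div ((hcont_den v).continuousOn)
      fun s hs => (hs v).ne'
  -- base point
  have hR₀N : Sum.elim r₀ (fun _ : Fin 2 => (1 : ℝ)) ∈ N := by
    rw [hNdef]
    refine ⟨⟨by norm_num, by norm_num⟩, fun v => ?_, ?_⟩
    · simp only [denA, Sum.elim_inr, Sum.elim_inl]
      norm_num
    · have hg : (fun v => gA (Sum.elim r₀ fun _ : Fin 2 => (1 : ℝ)) v) = r₀ := by
        funext v
        simp only [gA, denA, Sum.elim_inr, Sum.elim_inl]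
        norm_num
        ring
      show (fun v => gA (Sum.elim r₀ fun _ : Fin 2 => (1 : ℝ)) v) ∈ interior S
      rw [hg]
      exact hr₀
  -- the key inclusion
  have hNsub : N ⊆ radiiSet 3 (joinK2 G) := by
    rintro s ⟨⟨hsa, hsb⟩, hden, hgU⟩
    simp only [Set.mem_setOf_eq] at hsa hsb hden hgU
    set r : V → ℝ := fun v => gA s v with hrdef
    have hrS : r ∈ S := interior_subset hgU
    obtain ⟨p, hp⟩ := hrS
    have hrpos : ∀ v, 0 < r v := fun v => by simpa using hp.1 (Sum.inl v)
    have hσ : 0 < s (Sum.inr 0) + s (Sum.inr 1) := by linarith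
    by_cases ht : s (Sum.inr 0) - s (Sum.inr 1) = 0
    · -- pure scaling case
      have hfun : s = fun u => s (Sum.inr 0) * Sum.elim r (fun _ : Fin 2 => (1 : ℝ)) u := by
        funext u
        cases u with
        | inl v =>
          simp only [Sum.elim_inl]
          have hd0 : denA s v ≠ 0 := (hden v).ne'
          rw [hrdef]
          simp only [gA]
          rw [mul_div_assoc', eq_comm, div_eq_iff hd0]
          simp only [denA]
          linear_combination (s (Sum.inl v) * (4 * s (Sum.inr 0) *
            (s (Sum.inr 0) + s (Sum.inr 1)) + 2 * s (Sum.inl v) *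
            (s (Sum.inr 0) - s (Sum.inr 1)))) * ht
        | inr i =>
          fin_cases i
          · simp
          · simp only [Fin.mk_one, Sum.elim_inr, mul_one]
            linarith
      rw [hfun]
      exact ⟨fun u => s (Sum.inr 0) • p u, smul_packing hp hsa⟩
    · -- inversion case
      have ht' : s (Sum.inr 0) - s (Sum.inr 1) ≠ 0 := ht
      obtain ⟨w, hwt⟩ : ∃ w : ℝ, w * (s (Sum.inr 0) - s (Sum.inr 1))
          = 2 * (s (Sum.inr 0) + s (Sum.inr 1)) :=
        ⟨2 * (s (Sum.inr 0) + s (Sum.inr 1)) / (s (Sum.inr 0) - s (Sum.inr 1)), by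
          field_simp⟩
      have ht2 : 0 < (s (Sum.inr 0) - s (Sum.inr 1)) ^ 2 := by positivity
      have hw1 : 0 < w ^ 2 - 2 * w := by
        have heq : (w ^ 2 - 2 * w) * (s (Sum.inr 0) - s (Sum.inr 1)) ^ 2
            = 8 * (s (Sum.inr 0) + s (Sum.inr 1)) * s (Sum.inr 1) := by
          linear_combination (w * (s (Sum.inr 0) - s (Sum.inr 1))
            + 2 * (s (Sum.inr 0) + s (Sum.inr 1)) - 2 * (s (Sum.inr 0) - s (Sum.inr 1))) * hwt
        nlinarith [mul_pos hσ hsb]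
      have hw2 : 0 < w ^ 2 + 2 * w := by
        have heq : (w ^ 2 + 2 * w) * (s (Sum.inr 0) - s (Sum.inr 1)) ^ 2
            = 8 * (s (Sum.inr 0) + s (Sum.inr 1)) * s (Sum.inr 0) := by
          linear_combination (w * (s (Sum.inr 0) - s (Sum.inr 1))
            + 2 * (s (Sum.inr 0) + s (Sum.inr 1)) + 2 * (s (Sum.inr 0) - s (Sum.inr 1))) * hwt
        nlinarith [mul_pos hσ hsa]
      have hlam : 0 < s (Sum.inr 0) * (w ^ 2 - 2 * w) := mul_pos hsa hw1
      obtain ⟨x, hdv, hda, hdb⟩ := geom hp w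
      have hdpos : ∀ u, 0 < ‖p u - x‖ ^ 2 - (Sum.elim r (fun _ : Fin 2 => (1 : ℝ)) u) ^ 2 := by
        intro u
        cases u with
        | inl v =>
          simp only [Sum.elim_inl]
          rw [hdv v]
          nlinarith [hrpos v, sq_nonneg w]
        | inr i =>
          fin_cases i
          · simp only [Fin.zero_eta, Sum.elim_inr]
            rw [hda]
            exact hw1
          · simp only [Fin.mk_one, Sum.elim_inr]
            rw [hdb]
            exact hw2
      have hpack2 := inversion_packing hp x hdpos
      have hpack3 := smul_packing hpack2 hlam
      have hfun : s = fun u => s (Sum.inr 0) * (w ^ 2 - 2 * w)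
          * (Sum.elim r (fun _ : Fin 2 => (1 : ℝ)) u /
            (‖p u - x‖ ^ 2 - (Sum.elim r (fun _ : Fin 2 => (1 : ℝ)) u) ^ 2)) := by
        funext u
        cases u with
        | inl v =>
          simp only [Sum.elim_inl]
          rw [hdv v]
          have hd0 : denA s v ≠ 0 := (hden v).ne'
          have hd_eq : denA s v = (s (Sum.inr 0) - s (Sum.inr 1)) ^ 2
              * (s (Sum.inr 0) * (w ^ 2 - 2 * w) - 2 * s (Sum.inl v)) := by
            simp only [denA]
            linear_combination (-(s (Sum.inr 0) * (w * (s (Sum.inr 0) - s (Sum.inr 1))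
              + 2 * (s (Sum.inr 0) + s (Sum.inr 1)) - 2 * (s (Sum.inr 0) - s (Sum.inr 1))))) * hwt
          have hrd : r v * denA s v
              = s (Sum.inl v) * w ^ 2 * (s (Sum.inr 0) - s (Sum.inr 1)) ^ 2 := by
            rw [hrdef]
            simp only [gA]
            rw [div_mul_cancel₀ _ hd0]
            linear_combination (-(s (Sum.inl v) * (w * (s (Sum.inr 0) - s (Sum.inr 1))
              + 2 * (s (Sum.inr 0) + s (Sum.inr 1))))) * hwt
          have h2pos : 0 < 2 * r v + w ^ 2 := by nlinarith [hrpos v, sq_nonneg w]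
          rw [← mul_div_assoc, eq_comm, div_eq_iff h2pos.ne']
          apply mul_right_cancel₀ hd0
          linear_combination (s (Sum.inr 0) * (w ^ 2 - 2 * w) - 2 * s (Sum.inl v)) * hrd
            - s (Sum.inl v) * w ^ 2 * hd_eq
        | inr i =>
          fin_cases i
          · simp only [Fin.zero_eta, Sum.elim_inr]
            rw [hda, mul_one_div, mul_div_assoc, div_self hw1.ne', mul_one]
          · simp only [Fin.mk_one, Sum.elim_inr]
            rw [hdb, mul_one_div, eq_comm, div_eq_iff hw2.ne']
            apply mul_right_cancel₀ ht2.ne'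
            linear_combination ((s (Sum.inr 0) - s (Sum.inr 1)) * (w * (s (Sum.inr 0) - s (Sum.inr 1))
              + 2 * (s (Sum.inr 0) + s (Sum.inr 1)))
              - 2 * (s (Sum.inr 0) + s (Sum.inr 1)) * (s (Sum.inr 0) - s (Sum.inr 1))) * hwt
      rw [hfun]
      exact ⟨_, hpack3⟩
  exact ⟨Sum.elim r₀ (fun _ : Fin 2 => (1 : ℝ)),
    (hNopen.subset_interior_iff.mpr hNsub) hR₀N⟩


end
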